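/- arXiv:1506.05963 — 5 statements merged into one kernel-verified Lean document; each statement's English description precedes it below -/
import Mathlib

section
/- Every weighted game v on n voters admits an integer representation that is both type-revealing and dummy-revealing: there exist positive integer q and nonnegative integers w_1,…,w_n such that (q; w_1,…,w_n) is a representation of v, w_i = w_j whenever voters i and j are equivalent (i ≃ j), and w_i = 0 for every dummy voter i. -/
open Finset

/-- A (monotonic) simple game on `n` voters. -/
def IsSimpleGame {n : ℕ} (v : Finset (Fin n) → Bool) : Prop :=
  v ∅ = false ∧ v Finset.univ = true ∧
    ∀ S T : Finset (Fin n), S ⊆ T → v S = true → v T = true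

/-- `(q; w)` is a representation of the game `v`. -/
def IsRepresentation {n : ℕ} (v : Finset (Fin n) → Bool) (q : ℝ) (w : Fin n → ℝ) : Prop :=
  (∀ i, 0 ≤ w i) ∧ 0 < q ∧ ∀ S : Finset (Fin n), (q ≤ ∑ i ∈ S, w i ↔ v S = true)

/-- `v` is a weighted game. -/
def IsWeighted {n : ℕ} (v : Finset (Fin n) → Bool) : Prop :=
  ∃ (q : ℝ) (w : Fin n → ℝ), IsRepresentation v q w


/-- Voter `i` is a dummy of `v`. -/
def IsDummy {n : ℕ} (v : Finset (Fin n) → Bool) (i : Fin n) : Prop :=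
  ∀ S : Finset (Fin n), i ∉ S → v (insert i S) = v S


/-- Voters `i` and `j` are equivalent (`i ≃ j`). -/
def VotersEquiv {n : ℕ} (v : Finset (Fin n) → Bool) (i j : Fin n) : Prop :=
  ∀ S : Finset (Fin n), i ∉ S → j ∉ S → v (insert i S) = v (insert j S)

lemma swap_map_aux {n : ℕ} (v : Finset (Fin n) → Bool) {i j : Fin n}
    (h : VotersEquiv v i j) (S : Finset (Fin n)) (hi : i ∈ S) (hj : j ∉ S) :
    v (S.map (Equiv.swap i j).toEmbedding) = v S := by
  have hij : i ≠ j := fun e => hj (e ▸ hi)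
  have hmap : S.map (Equiv.swap i j).toEmbedding = insert j (S.erase i) := by
    ext x
    rw [Finset.mem_map_equiv, Equiv.symm_swap, Finset.mem_insert, Finset.mem_erase]
    rcases eq_or_ne x i with rfl | hxi
    · simp [Equiv.swap_apply_left, hj, hij]
    rcases eq_or_ne x j with rfl | hxj
    · simp [Equiv.swap_apply_right, hi, hij.symm]
    · rw [Equiv.swap_apply_of_ne_of_ne hxi hxj]
      simp [hxj, hxi]
  rw [hmap, ← h (S.erase i) (Finset.notMem_erase i S) (fun hx => hj (Finset.mem_of_mem_erase hx)),
    Finset.insert_erase hi]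

lemma swap_map {n : ℕ} (v : Finset (Fin n) → Bool) {i j : Fin n}
    (h : VotersEquiv v i j) (S : Finset (Fin n)) :
    v (S.map (Equiv.swap i j).toEmbedding) = v S := by
  have hsymm : VotersEquiv v j i := fun T hj hi => (h T hi hj).symm
  by_cases hi : i ∈ S <;> by_cases hj : j ∈ S
  · congr 1
    ext x
    rw [Finset.mem_map_equiv, Equiv.symm_swap]
    rcases eq_or_ne x i with rfl | hxi
    · simp [Equiv.swap_apply_left, hi, hj]
    rcases eq_or_ne x j with rfl | hxj
    · simp [Equiv.swap_apply_right, hi, hj]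
    · rw [Equiv.swap_apply_of_ne_of_ne hxi hxj]
  · exact swap_map_aux v h S hi hj
  · rw [Equiv.swap_comm]; exact swap_map_aux v hsymm S hj hi
  · congr 1
    ext x
    rw [Finset.mem_map_equiv, Equiv.symm_swap]
    rcases eq_or_ne x i with rfl | hxi
    · simp [Equiv.swap_apply_left, hi, hj]
    rcases eq_or_ne x j with rfl | hxj
    · simp [Equiv.swap_apply_right, hi, hj]
    · rw [Equiv.swap_apply_of_ne_of_ne hxi hxj]

lemma dummy_of_equiv {n : ℕ} (v : Finset (Fin n) → Bool) {i j : Fin n}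
    (h : VotersEquiv v i j) (hd : IsDummy v i) : IsDummy v j := by
  intro S hjS
  rcases eq_or_ne i j with rfl | hij
  · exact hd S hjS
  by_cases hiS : i ∈ S
  · have hT : S = insert i (S.erase i) := (Finset.insert_erase hiS).symm
    have hiT : i ∉ S.erase i := Finset.notMem_erase i S
    have hjT : j ∉ S.erase i := fun hx => hjS (Finset.mem_of_mem_erase hx)
    have hjiT : j ∉ insert i (S.erase i) := by rw [← hT]; exact hjS
    have hijT : i ∉ insert j (S.erase i) := by
      simp [Finset.mem_insert, hij, hiT]
    calc v (insert j S) = v (insert j (insert i (S.erase i))) := by rw [← hT]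
      _ = v (insert i (insert j (S.erase i))) := by rw [Finset.insert_comm]
      _ = v (insert j (S.erase i)) := hd _ hijT
      _ = v (insert i (S.erase i)) := (h _ hiT hjT).symm
      _ = v S := by rw [← hT]
  · calc v (insert j S) = v (insert i S) := (h S hiS hjS).symm
      _ = v S := hd S hiS

lemma sdiff_dummies {n : ℕ} (v : Finset (Fin n) → Bool) (T : Finset (Fin n))
    (hT : ∀ i ∈ T, IsDummy v i) : ∀ S, v (S \ T) = v S := by
  classical
  induction T using Finset.induction_on with
  | empty => simp
  | @insert a T' ha ih =>
    intro S
    have h1 : S \ insert a T' = (S \ T').erase a := Finset.sdiff_insert S T' a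
    have hda : IsDummy v a := hT a (Finset.mem_insert_self a T')
    have h2 : v ((S \ T').erase a) = v (S \ T') := by
      by_cases haX : a ∈ S \ T'
      · rw [← hda _ (Finset.notMem_erase a _), Finset.insert_erase haX]
      · rw [Finset.erase_eq_of_notMem haX]
    rw [h1, h2, ih (fun i hi => hT i (Finset.mem_insert_of_mem hi))]

/-- Every weighted game admits an integer representation. -/
theorem exists_type_and_dummy_revealing_integer_representation {n : ℕ}
    (v : Finset (Fin n) → Bool) (hs : IsSimpleGame v) (hw : IsWeighted v) :
    ∃ (q : ℕ) (w : Fin n → ℕ), 0 < q ∧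
      (∀ S : Finset (Fin n), (q ≤ ∑ i ∈ S, w i ↔ v S = true)) ∧
      (∀ i j : Fin n, VotersEquiv v i j → w i = w j) ∧
      (∀ i : Fin n, IsDummy v i → w i = 0) := by
  classical
  obtain ⟨q, w, hw0, hq0, hrep⟩ := hw
  have hn : 0 < n := by
    rcases Nat.eq_zero_or_pos n with h0 | h
    · exfalso
      obtain ⟨h1, h2, -⟩ := hs
      subst h0
      rw [Finset.univ_eq_empty] at h2
      rw [h1] at h2
      exact Bool.false_ne_true h2
    · exact h
  -- the group of v-preserving permutations
  set G : Finset (Equiv.Perm (Fin n)) :=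
    univ.filter (fun σ => ∀ S, v (S.map σ.toEmbedding) = v S) with hG
  have hGmem : ∀ σ, σ ∈ G ↔ ∀ S, v (S.map σ.toEmbedding) = v S := by
    intro σ; simp [hG]
  have hGid : (1 : Equiv.Perm (Fin n)) ∈ G := by
    rw [hGmem]
    intro S
    congr 1
    ext x
    simp [Finset.mem_map]
    exact Iff.rfl
  have hGcard : 0 < G.card := Finset.card_pos.mpr ⟨1, hGid⟩
  have hc : (0 : ℝ) < (G.card : ℝ) := by exact_mod_cast hGcard
  set w₂ : Fin n → ℝ := fun i => (∑ σ ∈ G, w (σ i)) / (G.card : ℝ) with hw₂def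
  have hsum₂ : ∀ S : Finset (Fin n),
      ∑ i ∈ S, w₂ i = (∑ σ ∈ G, ∑ i ∈ S.map σ.toEmbedding, w i) / (G.card : ℝ) := by
    intro S
    rw [← Finset.sum_div]
    congr 1
    rw [Finset.sum_comm]
    refine Finset.sum_congr rfl fun σ _ => ?_
    rw [Finset.sum_map]
    rfl
  have hrep₂ : ∀ S, (q ≤ ∑ i ∈ S, w₂ i ↔ v S = true) := by
    intro S
    rw [hsum₂]
    constructor
    · intro hle
      by_contra hvS
      have hvS' : v S = false := by
        cases hv : v S
        · rfl
        · exact absurd hv hvS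
      have hstrict : ∑ σ ∈ G, ∑ i ∈ S.map σ.toEmbedding, w i < ∑ σ ∈ G, q := by
        refine Finset.sum_lt_sum_of_nonempty ⟨1, hGid⟩ fun σ hσ => ?_
        have := (hGmem σ).mp hσ S
        by_contra hnot
        push_neg at hnot
        have := (hrep (S.map σ.toEmbedding)).mp hnot
        rw [(hGmem σ).mp hσ S, hvS'] at this
        exact Bool.false_ne_true this
      rw [Finset.sum_const, nsmul_eq_mul] at hstrict
      have : (∑ σ ∈ G, ∑ i ∈ S.map σ.toEmbedding, w i) / (G.card : ℝ) < q := by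
        rw [div_lt_iff₀ hc]
        linarith [hstrict]
      linarith
    · intro hvS
      rw [le_div_iff₀ hc]
      have hbig : ∑ σ ∈ G, q ≤ ∑ σ ∈ G, ∑ i ∈ S.map σ.toEmbedding, w i := by
        refine Finset.sum_le_sum fun σ hσ => ?_
        refine (hrep (S.map σ.toEmbedding)).mpr ?_
        rw [(hGmem σ).mp hσ S, hvS]
      rw [Finset.sum_const, nsmul_eq_mul] at hbig
      linarith
  have hw₂0 : ∀ i, 0 ≤ w₂ i := by
    intro i
    exact div_nonneg (Finset.sum_nonneg fun σ _ => hw0 _) hc.le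
  have hEq₂ : ∀ i j, VotersEquiv v i j → w₂ i = w₂ j := by
    intro i j hij
    have hτ : Equiv.swap i j ∈ G := (hGmem _).mpr (swap_map v hij)
    have : ∑ σ ∈ G, w (σ i) = ∑ σ ∈ G, w (σ j) := by
      refine Finset.sum_nbij' (fun σ => σ * Equiv.swap i j)
        (fun σ => σ * Equiv.swap i j) ?_ ?_ ?_ ?_ ?_
      · intro σ hσ
        rw [hGmem] at hσ ⊢
        intro S
        have : S.map ((σ * Equiv.swap i j).toEmbedding)
            = (S.map (Equiv.swap i j).toEmbedding).map σ.toEmbedding := by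
          rw [Finset.map_map]
          rfl
        rw [this, hσ, swap_map v hij]
      · intro σ hσ
        rw [hGmem] at hσ ⊢
        intro S
        have : S.map ((σ * Equiv.swap i j).toEmbedding)
            = (S.map (Equiv.swap i j).toEmbedding).map σ.toEmbedding := by
          rw [Finset.map_map]
          rfl
        rw [this, hσ, swap_map v hij]
      · intro σ _
        simp [mul_assoc]
      · intro σ _
        simp [mul_assoc]
      · intro σ _
        simp [Equiv.swap_apply_left]
    rw [hw₂def]
    simp only
    rw [this]
  -- zero out the dummies
  set w₃ : Fin n → ℝ := fun i => if IsDummy v i then 0 else w₂ i with hw₃def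
  have hw₃0 : ∀ i, 0 ≤ w₃ i := by
    intro i
    rw [hw₃def]
    dsimp only
    split
    · exact le_refl 0
    · exact hw₂0 i
  have hrep₃ : ∀ S, (q ≤ ∑ i ∈ S, w₃ i ↔ v S = true) := by
    intro S
    have hsplit : ∑ i ∈ S, w₃ i = ∑ i ∈ S.filter (fun i => ¬ IsDummy v i), w₂ i := by
      rw [Finset.sum_filter]
      refine Finset.sum_congr rfl fun i _ => ?_
      rw [hw₃def]
      dsimp only
      by_cases hd : IsDummy v i <;> simp [hd]
    have hvS : v (S.filter (fun i => ¬ IsDummy v i)) = v S := by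
      have : S.filter (fun i => ¬ IsDummy v i) = S \ S.filter (fun i => IsDummy v i) := by
        rw [Finset.filter_not]
      rw [this]
      exact sdiff_dummies v _ (fun i hi => (Finset.mem_filter.mp hi).2) S
    rw [hsplit, ← hvS]
    exact hrep₂ _
  have hEq₃ : ∀ i j, VotersEquiv v i j → w₃ i = w₃ j := by
    intro i j hij
    rw [hw₃def]
    dsimp only
    by_cases hdi : IsDummy v i
    · have hdj : IsDummy v j := dummy_of_equiv v hij hdi
      simp [hdi, hdj]
    · have hdj : ¬ IsDummy v j := fun hdj =>
        hdi (dummy_of_equiv v (fun T hj hi => (hij T hi hj).symm) hdj)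
      simp [hdi, hdj, hEq₂ i j hij]
  have hdum₃ : ∀ i, IsDummy v i → w₃ i = 0 := by
    intro i hd
    rw [hw₃def]
    simp [hd]
  -- find the margin ε
  obtain ⟨S₀, hS₀mem, hS₀min⟩ := Finset.exists_min_image
    ((univ : Finset (Finset (Fin n))).filter (fun S => v S = false))
    (fun S => q - ∑ i ∈ S, w₃ i)
    ⟨∅, by simp [hs.1]⟩
  set ε : ℝ := q - ∑ i ∈ S₀, w₃ i with hεdef
  have hS₀false : v S₀ = false := (Finset.mem_filter.mp hS₀mem).2
  have hε0 : 0 < ε := by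
    rw [hεdef]
    have : ¬ (q ≤ ∑ i ∈ S₀, w₃ i) := fun hle => by
      rw [(hrep₃ S₀).mp hle] at hS₀false
      exact Bool.noConfusion hS₀false
    linarith [lt_of_not_ge this]
  have hεbound : ∀ S, v S = false → ∑ i ∈ S, w₃ i ≤ q - ε := by
    intro S hvS
    have := hS₀min S (Finset.mem_filter.mpr ⟨Finset.mem_univ S, hvS⟩)
    linarith
  -- choose scale M
  obtain ⟨M, hM⟩ := exists_nat_gt ((n : ℝ) / ε)
  have hnM : (n : ℝ) < (M : ℝ) * ε := by
    rw [div_lt_iff₀ hε0] at hM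
    linarith
  have hM0 : (0 : ℝ) < (M : ℝ) := by
    have h1 : (0 : ℝ) < (n : ℝ) / ε := div_pos (by exact_mod_cast hn) hε0
    linarith
  -- integer weights
  set wZ : Fin n → ℤ := fun i => ⌈(M : ℝ) * w₃ i⌉ with hwZdef
  set qZ : ℤ := ⌈(M : ℝ) * q⌉ with hqZdef
  have hwZ0 : ∀ i, 0 ≤ wZ i := fun i =>
    Int.ceil_nonneg (mul_nonneg hM0.le (hw₃0 i))
  have hqZ0 : 0 < qZ := by
    rw [hqZdef]
    exact Int.ceil_pos.mpr (mul_pos hM0 hq0)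
  have hrepZ : ∀ S, (qZ ≤ ∑ i ∈ S, wZ i ↔ v S = true) := by
    intro S
    constructor
    · intro hle
      by_contra hvS
      have hvS' : v S = false := by
        cases hv : v S
        · rfl
        · exact absurd hv hvS
      have hub : ((∑ i ∈ S, wZ i : ℤ) : ℝ) < (qZ : ℝ) := by
        push_cast
        have h1 : ∑ i ∈ S, ((wZ i : ℝ)) ≤ ∑ i ∈ S, ((M : ℝ) * w₃ i + 1) := by
          refine Finset.sum_le_sum fun i _ => ?_
          exact le_of_lt (Int.ceil_lt_add_one _)
        have h2 : ∑ i ∈ S, ((M : ℝ) * w₃ i + 1)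
            = (M : ℝ) * ∑ i ∈ S, w₃ i + S.card := by
          rw [Finset.sum_add_distrib, Finset.sum_const, ← Finset.mul_sum]
          push_cast
          ring
        have h3 : (S.card : ℝ) ≤ (n : ℝ) := by
          exact_mod_cast Finset.card_le_card (Finset.subset_univ S) |>.trans
            (le_of_eq (Finset.card_univ.trans (Fintype.card_fin n)))
        have h4 : ∑ i ∈ S, w₃ i ≤ q - ε := hεbound S hvS'
        have h5 : (M : ℝ) * q ≤ (qZ : ℝ) := Int.le_ceil _
        calc ∑ i ∈ S, ((wZ i : ℝ)) ≤ (M : ℝ) * ∑ i ∈ S, w₃ i + S.card := by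
              rw [← h2]; exact h1
          _ ≤ (M : ℝ) * (q - ε) + n := by
              have := mul_le_mul_of_nonneg_left h4 hM0.le
              linarith
          _ < (M : ℝ) * q := by rw [mul_sub]; linarith [hnM]
          _ ≤ (qZ : ℝ) := h5
      have : (∑ i ∈ S, wZ i : ℤ) < qZ := by exact_mod_cast hub
      omega
    · intro hvS
      have h1 : (M : ℝ) * q ≤ ((∑ i ∈ S, wZ i : ℤ) : ℝ) := by
        push_cast
        calc (M : ℝ) * q ≤ (M : ℝ) * ∑ i ∈ S, w₃ i :=
              mul_le_mul_of_nonneg_left ((hrep₃ S).mpr hvS) hM0.le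
          _ = ∑ i ∈ S, (M : ℝ) * w₃ i := Finset.mul_sum _ _ _
          _ ≤ ∑ i ∈ S, ((wZ i : ℝ)) := Finset.sum_le_sum fun i _ => Int.le_ceil _
      exact Int.ceil_le.mpr (by exact_mod_cast h1)
  refine ⟨qZ.toNat, fun i => (wZ i).toNat, ?_, ?_, ?_, ?_⟩
  · omega
  · intro S
    rw [← hrepZ S]
    have hcast : ((∑ i ∈ S, (wZ i).toNat : ℕ) : ℤ) = ∑ i ∈ S, wZ i := by
      push_cast
      exact Finset.sum_congr rfl fun i _ => Int.toNat_of_nonneg (hwZ0 i)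
    constructor
    · intro h
      have : ((qZ.toNat : ℕ) : ℤ) ≤ ((∑ i ∈ S, (wZ i).toNat : ℕ) : ℤ) := by
        exact_mod_cast h
      rw [hcast] at this
      omega
    · intro h
      have : ((qZ.toNat : ℕ) : ℤ) ≤ ((∑ i ∈ S, (wZ i).toNat : ℕ) : ℤ) := by
        rw [hcast]
        omega
      exact_mod_cast this
  · intro i j hij
    rw [hwZdef]
    simp [hEq₃ i j hij]
  · intro i hd
    rw [hwZdef]
    simp [hdum₃ i hd]
end

section
/- For each weighted game v on n voters there exist positive real numbers q̃, w̃_1,…,w̃_{n−1} and a real number α > 0 such that for all δ_0, δ_1,…,δ_{n−1} ∈ [−α, α], the vector (q̃+δ_0; w̃_1+δ_1,…,w̃_{n−1}+δ_{n−1}, 1 − Σ_{i=1}^{n−1}(w̃_i+δ_i)) is a normalized representation of v, i.e., all n weights are nonnegative and sum to 1, the quota lies in (0,1], and the vector is a representation of v. -/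
open Finset

set_option maxHeartbeats 2000000 in
/-- Full dimensionality: every weighted game on `n+1` voters admits a normalized
representation that stays a normalized representation under all sufficiently
small perturbations of the quota and the first `n` weights (the last weight
being adjusted so that the weights sum to one). -/
theorem full_dimension {n : ℕ} (v : Finset (Fin (n+1)) → Bool)
    (hs : IsSimpleGame v) (hw : IsWeighted v) :
    ∃ (qt : ℝ) (wt : Fin n → ℝ) (α : ℝ), 0 < qt ∧ (∀ i, 0 < wt i) ∧ 0 < α ∧
      ∀ (δ₀ : ℝ) (δ : Fin n → ℝ), δ₀ ∈ Set.Icc (-α) α →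
        (∀ i, δ i ∈ Set.Icc (-α) α) →
        ∀ w : Fin (n+1) → ℝ,
          w = Fin.snoc (fun i => wt i + δ i) (1 - ∑ i, (wt i + δ i)) →
          ((∀ j, 0 ≤ w j) ∧ (∑ j, w j) = 1 ∧ 0 < qt + δ₀ ∧ qt + δ₀ ≤ 1 ∧
            ∀ S : Finset (Fin (n+1)), (qt + δ₀ ≤ ∑ j ∈ S, w j ↔ v S = true)) := by
  obtain ⟨q0, w0, hw0, hq0, hiff⟩ := hw
  obtain ⟨hempty, huniv, hmono⟩ := hs
  have hLne : ((univ : Finset (Finset (Fin (n+1)))).filter (fun S => v S = false)).Nonempty :=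
    ⟨∅, by simp [hempty]⟩
  set m := ((univ : Finset (Finset (Fin (n+1)))).filter (fun S => v S = false)).sup' hLne
    (fun S => ∑ i ∈ S, w0 i) with hm
  have hmq : m < q0 := by
    rw [hm, Finset.sup'_lt_iff]
    intro S hS
    rw [Finset.mem_filter] at hS
    by_contra hcon
    push_neg at hcon
    have h := (hiff S).mp hcon
    rw [hS.2] at h
    exact Bool.false_ne_true h
  have hlosem : ∀ S, v S = false → ∑ i ∈ S, w0 i ≤ m := fun S hS =>
    Finset.le_sup' (fun S => ∑ i ∈ S, w0 i) (Finset.mem_filter.mpr ⟨Finset.mem_univ S, hS⟩)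
  set ε := (q0 - m) / (2*(n+1)) with hε
  have hεpos : 0 < ε := by
    apply div_pos (by linarith) (by positivity)
  have hεkey : 2*((n:ℝ)+1)*ε = q0 - m := by
    rw [hε]; field_simp
  set w' : Fin (n+1) → ℝ := fun i => w0 i + ε with hw'
  have hsum' : ∀ S : Finset (Fin (n+1)), ∑ i ∈ S, w' i = ∑ i ∈ S, w0 i + S.card * ε := by
    intro S
    rw [hw']
    rw [Finset.sum_add_distrib, Finset.sum_const, nsmul_eq_mul]
  have hwin : ∀ S, v S = true → q0 + ε ≤ ∑ i ∈ S, w' i := by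
    intro S hS
    have hSne : S.Nonempty := by
      rcases S.eq_empty_or_nonempty with h | h
      · exfalso; rw [h, hempty] at hS; exact Bool.false_ne_true hS
      · exact h
    have h1 : q0 ≤ ∑ i ∈ S, w0 i := (hiff S).mpr hS
    have h2 : (1:ℝ) ≤ S.card := by exact_mod_cast hSne.card_pos
    rw [hsum' S]
    nlinarith
  have hlose : ∀ S, v S = false → ∑ i ∈ S, w' i ≤ q0 - ε := by
    intro S hS
    have h1 := hlosem S hS
    have h2 : (S.card : ℝ) ≤ (n:ℝ)+1 := by
      have h := Finset.card_le_univ S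
      have h' : (S.card : ℝ) ≤ (Finset.univ : Finset (Fin (n+1))).card := by exact_mod_cast h
      simpa using h'
    rw [hsum' S]
    have h3 : (S.card:ℝ) * ε ≤ ((n:ℝ)+1)*ε := by nlinarith
    nlinarith [Nat.cast_nonneg (α := ℝ) n]
  set T := ∑ i, w' i with hT
  have hTwin : q0 + ε ≤ T := hwin univ huniv
  have hTpos : 0 < T := by linarith
  set qt := (q0 + ε/2) / T with hqt
  have hqtpos : 0 < qt := by
    rw [hqt]; exact div_pos (by linarith) hTpos
  set wt : Fin n → ℝ := fun i => w' i.castSucc / T with hwt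
  set β := ε / (2*T) with hβ
  have hβpos : 0 < β := by
    rw [hβ]; exact div_pos hεpos (by linarith)
  set α := min (β/(2*(n:ℝ)+2)) (min (ε/(T*((n:ℝ)+1))) (qt/2)) with hα
  have hnn : (0:ℝ) ≤ (n:ℝ) := Nat.cast_nonneg n
  clear_value α β wt qt T w' ε m
  have hαpos : 0 < α := by
    rw [hα]
    exact lt_min (div_pos hβpos (by linarith)) (lt_min (div_pos hεpos (by nlinarith)) (by linarith))
  have hα1 : (2*(n:ℝ)+2)*α ≤ β := by
    have h : α ≤ β/(2*(n:ℝ)+2) := by rw [hα]; exact min_le_left _ _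
    rw [mul_comm]
    exact (le_div_iff₀ (by linarith)).mp h
  have hα2 : α * (T*((n:ℝ)+1)) ≤ ε := by
    have h' : α ≤ ε/(T*((n:ℝ)+1)) := by rw [hα]; exact le_trans (min_le_right _ _) (min_le_left _ _)
    exact (le_div_iff₀ (by nlinarith)).mp h'
  have hα3 : α ≤ qt/2 := by rw [hα]; exact le_trans (min_le_right _ _) (min_le_right _ _)
  -- lower bound on normalized weights
  have hwlb : ∀ j : Fin (n+1), ε/T ≤ w' j / T := by
    intro j
    apply div_le_div_of_nonneg_right ?_ hTpos.le
    have h := hw0 j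
    rw [hw']
    dsimp only
    linarith
  have hwtlb : ∀ i : Fin n, ε/T ≤ wt i := by
    intro i
    rw [hwt]
    exact hwlb i.castSucc
  have hwtpos : ∀ i, 0 < wt i := fun i => lt_of_lt_of_le (div_pos hεpos hTpos) (hwtlb i)
  have hlastlb : ε/T ≤ w' (Fin.last n) / T := hwlb (Fin.last n)
  have hsum1 : ∑ j : Fin (n+1), w' j / T = 1 := by
    rw [← Finset.sum_div, ← hT, div_self (ne_of_gt hTpos)]
  have hlasteq : w' (Fin.last n) / T = 1 - ∑ i, wt i := by
    have h := Fin.sum_univ_castSucc (f := fun j => w' j / T)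
    rw [hsum1] at h
    rw [hwt]
    linarith [h]
  have hqtβ : qt + β = (q0+ε)/T := by rw [hqt, hβ]; ring
  have hqtβ' : qt - 3*β = (q0-ε)/T := by rw [hqt, hβ]; ring
  have hwinN : ∀ S, v S = true → qt + β ≤ ∑ j ∈ S, w' j / T := by
    intro S hS
    rw [hqtβ, ← Finset.sum_div]
    exact div_le_div_of_nonneg_right (hwin S hS) hTpos.le
  have hloseN : ∀ S, v S = false → ∑ j ∈ S, w' j / T ≤ qt - 3*β := by
    intro S hS
    rw [hqtβ', ← Finset.sum_div]
    exact div_le_div_of_nonneg_right (hlose S hS) hTpos.le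
  have hqtle : qt + β ≤ 1 := by
    rw [hqtβ]
    exact (div_le_one hTpos).mpr hTwin
  refine ⟨qt, wt, α, hqtpos, hwtpos, hαpos, ?_⟩
  intro δ₀ δ hδ₀ hδ w hwdef
  subst hwdef
  obtain ⟨hδ₀l, hδ₀r⟩ := hδ₀
  have hδabs : ∀ i, |δ i| ≤ α := fun i => abs_le.mpr ⟨(hδ i).1, (hδ i).2⟩
  have hδsumabs : |∑ i, δ i| ≤ (n:ℝ) * α := by
    calc |∑ i, δ i| ≤ ∑ i, |δ i| := Finset.abs_sum_le_sum_abs _ _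
    _ ≤ ∑ _i : Fin n, α := Finset.sum_le_sum (fun i _ => hδabs i)
    _ = (n:ℝ) * α := by simp [mul_comm]
  set d : Fin (n+1) → ℝ := Fin.snoc δ (-(∑ i, δ i)) with hd
  clear_value d
  have hweq : ∀ j, (Fin.snoc (fun i => wt i + δ i) (1 - ∑ i, (wt i + δ i)) : Fin (n+1) → ℝ) j
      = w' j / T + d j := by
    intro j
    refine Fin.lastCases ?_ ?_ j
    · rw [hd]
      simp only [Fin.snoc_last]
      rw [hlasteq, Finset.sum_add_distrib]
      ring
    · intro i
      rw [hd]
      simp [Fin.snoc_castSucc, hwt]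
  have hdabs : ∀ S : Finset (Fin (n+1)), |∑ j ∈ S, d j| ≤ 2*(n:ℝ)*α := by
    intro S
    calc |∑ j ∈ S, d j| ≤ ∑ j ∈ S, |d j| := Finset.abs_sum_le_sum_abs _ _
    _ ≤ ∑ j : Fin (n+1), |d j| := Finset.sum_le_sum_of_subset_of_nonneg (Finset.subset_univ S)
        (fun j _ _ => abs_nonneg _)
    _ = ∑ i : Fin n, |d i.castSucc| + |d (Fin.last n)| := Fin.sum_univ_castSucc _
    _ ≤ (n:ℝ)*α + (n:ℝ)*α := by
        apply add_le_add
        · calc ∑ i : Fin n, |d i.castSucc| = ∑ i : Fin n, |δ i| := by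
                apply Finset.sum_congr rfl; intro i _; rw [hd]; simp
          _ ≤ ∑ _i : Fin n, α := Finset.sum_le_sum (fun i _ => hδabs i)
          _ = (n:ℝ)*α := by simp [mul_comm]
        · rw [hd]; simpa using hδsumabs
    _ = 2*(n:ℝ)*α := by ring
  have hsumw : ∀ S : Finset (Fin (n+1)),
      ∑ j ∈ S, (Fin.snoc (fun i => wt i + δ i) (1 - ∑ i, (wt i + δ i)) : Fin (n+1) → ℝ) j
      = ∑ j ∈ S, w' j / T + ∑ j ∈ S, d j := by
    intro S
    rw [← Finset.sum_add_distrib]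
    exact Finset.sum_congr rfl (fun j _ => hweq j)
  have hαT : α * T ≤ ε := by
    have h1 : α*(T*((n:ℝ)+1)) = α*T + α*T*(n:ℝ) := by ring
    have h0 : 0 ≤ α*T*(n:ℝ) := mul_nonneg (mul_nonneg hαpos.le hTpos.le) hnn
    linarith [hα2]
  have hαεT : α ≤ ε / T := (le_div_iff₀ hTpos).mpr hαT
  have hnα : ((n:ℝ)+1) * α ≤ ε / T := by
    rw [le_div_iff₀ hTpos]
    calc ((n:ℝ)+1)*α*T = α * (T*((n:ℝ)+1)) := by ring
    _ ≤ ε := hα2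
  have hnnα : 0 ≤ (n:ℝ)*α := mul_nonneg hnn hαpos.le
  have hαβ : α ≤ β := by linarith [hα1, hnnα, hαpos]
  refine ⟨?_, ?_, ?_, ?_, ?_⟩
  · intro j
    refine Fin.lastCases ?_ ?_ j
    · simp only [Fin.snoc_last]
      have h1 : ∑ i, (wt i + δ i) = ∑ i, wt i + ∑ i, δ i := Finset.sum_add_distrib
      have h2 : ∑ i, δ i ≤ (n:ℝ)*α := le_trans (le_abs_self _) hδsumabs
      have h3 : 1 - ∑ i, wt i = w' (Fin.last n) / T := hlasteq.symm
      nlinarith [hlastlb, hαpos.le]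
    · intro i
      simp only [Fin.snoc_castSucc]
      have := hwtlb i
      have := (hδ i).1
      have := hαεT
      linarith
  · rw [Fin.sum_univ_castSucc]
    simp only [Fin.snoc_castSucc, Fin.snoc_last]
    ring
  · linarith
  · linarith [hαβ, hβpos]
  · intro S
    rw [hsumw S]
    have hdb := abs_le.mp (hdabs S)
    constructor
    · intro hle
      by_contra hcon
      have hvf : v S = false := by
        cases hvs : v S
        · rfl
        · exact absurd hvs hcon
      have h1 := hloseN S hvf
      linarith [hα1, hαpos, hnnα, hdb.1, hdb.2]
    · intro hvt
      have h1 := hwinN S hvt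
      linarith [hα1, hαpos, hnnα, hdb.1, hdb.2]
end

section
/- Let v be a weighted game on n voters with an integer representation (q; w_1,…,w_n) such that w_i ≥ 1 for all 1 ≤ i ≤ n. Then for all real numbers δ̃_0, δ̃_1,…,δ̃_n ∈ [−1/(5n), 1/(5n)], the vector (q − 2/5 + δ̃_0; w_1+δ̃_1,…,w_n+δ̃_n) is a representation of v. -/
open Finset

/-- Perturbing an integer representation with all weights at least one by at most
$1/(5n)$ in each coordinate, and replacing the quota $q$ by $q - 2/5$ perturbed
by at most $1/(5n)$, still yields a representation of the game. -/
theorem perturbed_integer_representation {n : ℕ} (v : Finset (Fin n) → Bool)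
    (hs : IsSimpleGame v) (q : ℤ) (w : Fin n → ℤ) (hq : 0 < q)
    (hw1 : ∀ i, 1 ≤ w i)
    (hrep : ∀ S : Finset (Fin n), (q ≤ ∑ i ∈ S, w i ↔ v S = true))
    (δ₀ : ℝ) (δ : Fin n → ℝ)
    (hδ₀ : δ₀ ∈ Set.Icc (-(1 / (5 * (n : ℝ)))) (1 / (5 * (n : ℝ))))
    (hδ : ∀ i, δ i ∈ Set.Icc (-(1 / (5 * (n : ℝ)))) (1 / (5 * (n : ℝ)))) :
    IsRepresentation v ((q : ℝ) - 2/5 + δ₀) (fun i => (w i : ℝ) + δ i) := by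

  rcases Nat.eq_zero_or_pos n with hn | hn
  · exfalso
    subst hn
    have h1 := hs.1
    have h2 := hs.2.1
    rw [Finset.univ_eq_empty, h1] at h2
    exact Bool.false_ne_true h2
  · have hn1 : (1:ℝ) ≤ n := by exact_mod_cast hn
    have hpos : (0:ℝ) < 5 * n := by positivity
    have hb : 1 / (5 * (n:ℝ)) ≤ 1/5 := by
      rw [div_le_div_iff₀ hpos (by norm_num)]
      nlinarith
    have hδ₀l : -(1/5 : ℝ) ≤ δ₀ := by linarith [hδ₀.1]
    have hδ₀u : δ₀ ≤ (1/5 : ℝ) := by linarith [hδ₀.2]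
    have hsumδ : ∀ S : Finset (Fin n), |∑ i ∈ S, δ i| ≤ 1/5 := by
      intro S
      have hcard : (S.card : ℝ) ≤ n := by
        exact_mod_cast le_trans (Finset.card_le_univ S) (by simp)
      calc |∑ i ∈ S, δ i| ≤ ∑ i ∈ S, |δ i| := Finset.abs_sum_le_sum_abs _ _
        _ ≤ ∑ _i ∈ S, 1 / (5 * (n:ℝ)) :=
            Finset.sum_le_sum (fun i _ => abs_le.mpr ⟨(hδ i).1, (hδ i).2⟩)
        _ = S.card * (1 / (5 * (n:ℝ))) := by rw [Finset.sum_const, nsmul_eq_mul]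
        _ ≤ n * (1 / (5 * (n:ℝ))) :=
            mul_le_mul_of_nonneg_right hcard (by positivity)
        _ = 1/5 := by field_simp
    have hq1 : (1:ℝ) ≤ q := by exact_mod_cast hq
    refine ⟨?_, ?_, ?_⟩
    · intro i
      have h1 : (1:ℝ) ≤ w i := by exact_mod_cast hw1 i
      have := (hδ i).1
      simp only
      linarith
    · linarith
    · intro S
      have hS := hrep S
      have hsplit : ∑ i ∈ S, ((w i : ℝ) + δ i)
          = ((∑ i ∈ S, w i : ℤ) : ℝ) + ∑ i ∈ S, δ i := by
        rw [Finset.sum_add_distrib]; push_cast; ring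
      have habs := hsumδ S
      rw [abs_le] at habs
      constructor
      · intro h
        rw [hsplit] at h
        by_contra hv
        have hnot : ¬ q ≤ ∑ i ∈ S, w i := fun hle => hv (hS.mp hle)
        have hint : ∑ i ∈ S, w i ≤ q - 1 := by omega
        have hreal : ((∑ i ∈ S, w i : ℤ) : ℝ) ≤ (q:ℝ) - 1 := by exact_mod_cast hint
        linarith [habs.2]
      · intro hv
        have hint : q ≤ ∑ i ∈ S, w i := hS.mpr hv
        have hreal : (q:ℝ) ≤ ((∑ i ∈ S, w i : ℤ) : ℝ) := by exact_mod_cast hint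
        rw [hsplit]
        linarith [habs.1]
end

section
/- Let v be a weighted game on n voters and v^d its dual game. A weight vector (w_1,…,w_n) with w_i ≥ 0 and Σ_{i=1}^n w_i = 1 is feasible for v if and only if it is feasible for v^d; that is, the weight polytopes of v and v^d coincide. -/
open Finset

lemma dual_rep {n : ℕ} (v : Finset (Fin n) → Bool) (w : Fin n → ℝ)
    (hsum : (∑ i, w i) = 1) (hu : v Finset.univ = true)
    (q : ℝ) (h : IsRepresentation v q w) :
    ∃ q' : ℝ, IsRepresentation (fun S : Finset (Fin n) => !v Sᶜ) q' w := by
  obtain ⟨hnn, hq, hrep⟩ := h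
  have hq1 : q ≤ 1 := by
    have := (hrep Finset.univ).mpr hu
    rwa [hsum] at this
  -- key : for any S, dual wins iff 1 - q < ∑_S w
  have key : ∀ S : Finset (Fin n), (!v Sᶜ) = true ↔ 1 - q < ∑ i ∈ S, w i := by
    intro S
    have hc : ∑ i ∈ Sᶜ, w i = 1 - ∑ i ∈ S, w i := by
      have := Finset.sum_compl_add_sum S w
      linarith [hsum ▸ this]
    rw [Bool.not_eq_true', ← Bool.not_eq_true, ← hrep Sᶜ, hc]
    constructor
    · intro hlt; linarith [lt_of_not_ge hlt]
    · intro hlt hle; linarith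
  set F : Finset (Finset (Fin n)) :=
    Finset.univ.filter (fun S => (!v Sᶜ) = true) with hF
  have hne : F.Nonempty := by
    refine ⟨Finset.univ, ?_⟩
    simp only [hF, Finset.mem_filter, Finset.mem_univ, true_and]
    rw [key]; rw [hsum]; linarith
  set q' : ℝ := F.inf' hne (fun S => ∑ i ∈ S, w i) with hq'
  have hq'gt : 1 - q < q' := by
    obtain ⟨S₀, hS₀, hEq⟩ := Finset.exists_mem_eq_inf' hne (fun S => ∑ i ∈ S, w i)
    rw [hq', hEq]
    exact (key S₀).mp (by simpa [hF] using hS₀)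
  refine ⟨q', hnn, by linarith, fun S => ?_⟩
  constructor
  · intro hle
    rw [key]; linarith
  · intro hS
    exact Finset.inf'_le _ (by simp only [hF, Finset.mem_filter, Finset.mem_univ, true_and]; exact hS)

/-- A normalized weight vector is feasible for a weighted game iff it is feasible
for its dual game: the weight polytopes of a game and its dual coincide. -/
theorem feasible_iff_feasible_dual {n : ℕ} (v : Finset (Fin n) → Bool)
    (hs : IsSimpleGame v) (hw : IsWeighted v)
    (w : Fin n → ℝ) (hnn : ∀ i, 0 ≤ w i) (hsum : (∑ i, w i) = 1) :
    (∃ q : ℝ, IsRepresentation v q w) ↔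
      (∃ q : ℝ, IsRepresentation (fun S : Finset (Fin n) => !v Sᶜ) q w) := by
  constructor
  · rintro ⟨q, hq⟩
    exact dual_rep v w hsum hs.2.1 q hq
  · rintro ⟨q, hq⟩
    have hu : (!v (Finset.univ : Finset (Fin n))ᶜ) = true := by
      simp [hs.1]
    obtain ⟨q', hq'⟩ := dual_rep _ w hsum hu q hq
    refine ⟨q', ?_⟩
    have : (fun S : Finset (Fin n) => !(!v Sᶜᶜ)) = v := by
      funext S; simp
    rwa [this] at hq'
end

section
/- Let v be the weighted game on 3 voters with representation (3; 2,1,1), and consider its representation polytope projected to the coordinates (q, w_1, w_2) by setting w_3 = 1 − w_1 − w_2: the region R = {(q,w_1,w_2) ∈ ℝ³ : w_1 ≥ 0, w_2 ≥ 0, w_1 + w_2 ≤ 1, w_1 + w_2 ≥ q, w_1 ≤ q, 1 − w_1 ≤ q, 1 − w_2 ≥ q}. Then the Lebesgue volume of R equals 1/72, ∫_R w_1 d(q,w_1,w_2) = 7/864, and ∫_R w_2 d(q,w_1,w_2) = 5/1728; consequently the average representation weight vector of v equals (7/12, 5/24, 5/24). -/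
open MeasureTheory

/-- The projected representation polytope of the game $[3;2,1,1]$ in the
coordinates $(q, w_1, w_2)$. -/
def representationRegion : Set (ℝ × ℝ × ℝ) :=
  {p | 0 ≤ p.2.1 ∧ 0 ≤ p.2.2 ∧ p.2.1 + p.2.2 ≤ 1 ∧ p.1 ≤ p.2.1 + p.2.2 ∧
       p.2.1 ≤ p.1 ∧ 1 - p.2.1 ≤ p.1 ∧ p.1 ≤ 1 - p.2.2}

namespace AvgRep

/-- The slice of the region at a fixed value of `q`. -/
def slice (q : ℝ) : Set (ℝ × ℝ) :=
  {w | (1 - q ≤ w.1 ∧ w.1 ≤ q) ∧ (q - w.1 ≤ w.2 ∧ w.2 ≤ 1 - q)}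

lemma region_eq :
    representationRegion = {p : ℝ × ℝ × ℝ |
      (1 - p.1 ≤ p.2.1 ∧ p.2.1 ≤ p.1) ∧ (p.1 - p.2.1 ≤ p.2.2 ∧ p.2.2 ≤ 1 - p.1)} := by
  ext ⟨q, w1, w2⟩
  simp only [representationRegion, Set.mem_setOf_eq]
  constructor
  · rintro ⟨h1, h2, h3, h4, h5, h6, h7⟩
    exact ⟨⟨by linarith, h5⟩, ⟨by linarith, by linarith⟩⟩
  · rintro ⟨⟨h1, h2⟩, ⟨h3, h4⟩⟩
    refine ⟨by linarith, by linarith, by linarith, by linarith, h2, by linarith, by linarith⟩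

lemma mem_region_iff (q : ℝ) (w : ℝ × ℝ) :
    (q, w) ∈ representationRegion ↔ w ∈ slice q := by
  rw [region_eq]; rfl

lemma measurableSet_region : MeasurableSet representationRegion := by
  rw [region_eq]
  simp only [Set.setOf_and]
  refine MeasurableSet.inter (MeasurableSet.inter ?_ ?_) (MeasurableSet.inter ?_ ?_) <;>
    apply measurableSet_le <;> fun_prop

lemma measurableSet_slice (q : ℝ) : MeasurableSet (slice q) := by
  have : slice q = ({w : ℝ × ℝ | 1 - q ≤ w.1} ∩ {w | w.1 ≤ q}) ∩
      ({w | q - w.1 ≤ w.2} ∩ {w | w.2 ≤ 1 - q}) := by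
    ext w; simp [slice, Set.mem_setOf_eq]
  rw [this]
  refine MeasurableSet.inter (MeasurableSet.inter ?_ ?_) (MeasurableSet.inter ?_ ?_) <;>
    apply measurableSet_le <;> fun_prop

lemma region_subset_Icc :
    representationRegion ⊆ Set.Icc ((0 : ℝ), ((0 : ℝ), (0 : ℝ))) (1, (1, 1)) := by
  rintro ⟨q, w1, w2⟩ ⟨h1, h2, h3, h4, h5, h6, h7⟩
  simp only [Set.mem_Icc, Prod.le_def]
  refine ⟨⟨by linarith, h1, h2⟩, by linarith, by linarith, by linarith⟩

lemma slice_subset_Icc (q : ℝ) :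
    slice q ⊆ Set.Icc ((1 - q : ℝ), (0 : ℝ)) (q, 1 - q) := by
  rintro ⟨w1, w2⟩ ⟨⟨h1, h2⟩, h3, h4⟩
  simp only [Set.mem_Icc, Prod.le_def]
  exact ⟨⟨h1, by linarith⟩, h2, h4⟩

lemma integrableOn_region (f : ℝ × ℝ × ℝ → ℝ) (hf : Continuous f) :
    IntegrableOn f representationRegion := by
  exact (hf.integrableOn_Icc).mono_set region_subset_Icc

lemma integrableOn_slice (q : ℝ) (f : ℝ × ℝ → ℝ) (hf : Continuous f) :
    IntegrableOn f (slice q) := by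
  exact (hf.integrableOn_Icc).mono_set (slice_subset_Icc q)

lemma setInt_Icc {a b : ℝ} (f : ℝ → ℝ) (h : a ≤ b) :
    ∫ x in Set.Icc a b, f x = ∫ x in a..b, f x := by
  rw [MeasureTheory.integral_Icc_eq_integral_Ioc, ← intervalIntegral.integral_of_le h]

lemma setInt_Icc_zero {a b : ℝ} (f : ℝ → ℝ) (h : b ≤ a) :
    ∫ x in Set.Icc a b, f x = 0 := by
  rw [MeasureTheory.integral_Icc_eq_integral_Ioc, Set.Ioc_eq_empty (not_lt.mpr h),
    setIntegral_empty]

lemma interval_poly (a b c0 c1 c2 c3 : ℝ) (f : ℝ → ℝ)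
    (hf : ∀ x, f x = c0 + c1 * x + c2 * x ^ 2 + c3 * x ^ 3) :
    ∫ x in a..b, f x =
      (c0 * b + c1 / 2 * b ^ 2 + c2 / 3 * b ^ 3 + c3 / 4 * b ^ 4) -
        (c0 * a + c1 / 2 * a ^ 2 + c2 / 3 * a ^ 3 + c3 / 4 * a ^ 4) := by
  have i0 : IntervalIntegrable (fun _ : ℝ => c0) volume a b := intervalIntegrable_const
  have i1 : IntervalIntegrable (fun x : ℝ => c1 * x) volume a b :=
    (by fun_prop : Continuous fun x : ℝ => c1 * x).intervalIntegrable a b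
  have i2 : IntervalIntegrable (fun x : ℝ => c2 * x ^ 2) volume a b :=
    (by fun_prop : Continuous fun x : ℝ => c2 * x ^ 2).intervalIntegrable a b
  have i3 : IntervalIntegrable (fun x : ℝ => c3 * x ^ 3) volume a b :=
    (by fun_prop : Continuous fun x : ℝ => c3 * x ^ 3).intervalIntegrable a b
  have : ∫ x in a..b, f x = ∫ x in a..b, (c0 + c1 * x + c2 * x ^ 2 + c3 * x ^ 3) := by
    simp only [hf]
  rw [this, intervalIntegral.integral_add ((i0.add i1).add i2) i3,
    intervalIntegral.integral_add (i0.add i1) i2, intervalIntegral.integral_add i0 i1,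
    intervalIntegral.integral_const, intervalIntegral.integral_const_mul,
    intervalIntegral.integral_const_mul, intervalIntegral.integral_const_mul,
    integral_id, integral_pow, integral_pow]
  simp only [smul_eq_mul]
  ring

/-- Fubini reduction of the region integral to iterated integrals. -/
lemma region_integral_eq (f : ℝ × ℝ × ℝ → ℝ) (hf : Continuous f) :
    ∫ p in representationRegion, f p =
      ∫ q in Set.Icc (1 / 2 : ℝ) 1, ∫ w1 in Set.Icc (1 - q) q,
        ∫ w2 in Set.Icc (q - w1) (1 - q), f (q, w1, w2) := by
  have hS := measurableSet_region
  have hfS := integrableOn_region f hf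
  have hint : Integrable (representationRegion.indicator f)
      ((volume : Measure ℝ).prod (volume : Measure (ℝ × ℝ))) := by
    rw [← Measure.volume_eq_prod]
    exact (integrable_indicator_iff hS).2 hfS
  rw [← integral_indicator hS, Measure.volume_eq_prod ℝ (ℝ × ℝ),
    integral_prod _ hint]
  have key : ∀ q : ℝ,
      (∫ w : ℝ × ℝ, representationRegion.indicator f (q, w)) =
        ∫ w1 in Set.Icc (1 - q) q, ∫ w2 in Set.Icc (q - w1) (1 - q), f (q, w1, w2) := by
    intro q
    have h1 : ∀ w : ℝ × ℝ, representationRegion.indicator f (q, w) =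
        (slice q).indicator (fun w => f (q, w.1, w.2)) w := by
      intro w
      by_cases hw : w ∈ slice q
      · rw [Set.indicator_of_mem ((mem_region_iff q w).2 hw), Set.indicator_of_mem hw]
      · rw [Set.indicator_of_notMem (fun hc => hw ((mem_region_iff q w).1 hc)),
          Set.indicator_of_notMem hw]
    simp_rw [h1]
    have hint2 : Integrable ((slice q).indicator fun w => f (q, w.1, w.2))
        ((volume : Measure ℝ).prod (volume : Measure ℝ)) := by
      rw [← Measure.volume_eq_prod]
      exact (integrable_indicator_iff (measurableSet_slice q)).2
        (integrableOn_slice q _ (by fun_prop))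
    rw [Measure.volume_eq_prod ℝ ℝ, integral_prod _ hint2]
    have h2 : ∀ w1 : ℝ,
        (∫ w2, (slice q).indicator (fun w => f (q, w.1, w.2)) (w1, w2)) =
          (Set.Icc (1 - q) q).indicator
            (fun w1 => ∫ w2 in Set.Icc (q - w1) (1 - q), f (q, w1, w2)) w1 := by
      intro w1
      by_cases h : w1 ∈ Set.Icc (1 - q) q
      · rw [Set.indicator_of_mem h]
        obtain ⟨ha, hb⟩ := Set.mem_Icc.1 h
        have h3 : ∀ w2 : ℝ, (slice q).indicator (fun w => f (q, w.1, w.2)) (w1, w2) =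
            (Set.Icc (q - w1) (1 - q)).indicator (fun w2 => f (q, w1, w2)) w2 := by
          intro w2
          have hiff : ((1 - q ≤ w1 ∧ w1 ≤ q) ∧ q - w1 ≤ w2 ∧ w2 ≤ 1 - q) ↔
              (q - w1 ≤ w2 ∧ w2 ≤ 1 - q) := ⟨fun h => h.2, fun h => ⟨⟨ha, hb⟩, h⟩⟩
          by_cases hc : q - w1 ≤ w2 ∧ w2 ≤ 1 - q
          · rw [Set.indicator_of_mem (show (w1, w2) ∈ slice q from ⟨⟨ha, hb⟩, hc⟩),
              Set.indicator_of_mem (Set.mem_Icc.2 hc)]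
          · rw [Set.indicator_of_notMem (fun hm => hc hm.2),
              Set.indicator_of_notMem (fun hm => hc (Set.mem_Icc.1 hm))]
        simp_rw [h3]
        rw [integral_indicator measurableSet_Icc]
      · rw [Set.indicator_of_notMem h]
        have h3 : ∀ w2 : ℝ, (slice q).indicator (fun w => f (q, w.1, w.2)) (w1, w2) = 0 := by
          intro w2
          apply Set.indicator_of_notMem
          intro hmem
          exact h (Set.mem_Icc.2 ⟨hmem.1.1, hmem.1.2⟩)
        simp_rw [h3, integral_zero]
    simp_rw [h2]
    rw [integral_indicator measurableSet_Icc]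
  simp_rw [key]
  refine (setIntegral_eq_integral_of_forall_compl_eq_zero ?_).symm
  intro q hq
  rw [Set.mem_Icc, not_and_or] at hq
  rcases hq with hq | hq
  · push_neg at hq
    rw [Set.Icc_eq_empty (by intro h; linarith : ¬(1 - q) ≤ q), setIntegral_empty]
  · push_neg at hq
    rw [setIntegral_congr_fun measurableSet_Icc (g := fun _ => 0) ?_, integral_zero]
    intro w1 hw1
    obtain ⟨_, hw2⟩ := Set.mem_Icc.1 hw1
    exact setInt_Icc_zero _ (by linarith)

/-- Splitting evaluation over q ∈ [1/2, 1] at q = 2/3, given polynomial formulas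
on each piece. -/
lemma split_eval (G : ℝ → ℝ) (c0 c1 c2 c3 d0 d1 d2 d3 : ℝ)
    (h1 : ∀ q ∈ Set.Icc (1 / 2 : ℝ) (2 / 3), G q = c0 + c1 * q + c2 * q ^ 2 + c3 * q ^ 3)
    (h2 : ∀ q ∈ Set.Icc (2 / 3 : ℝ) 1, G q = d0 + d1 * q + d2 * q ^ 2 + d3 * q ^ 3) :
    ∫ q in Set.Icc (1 / 2 : ℝ) 1, G q =
      ((c0 * (2 / 3) + c1 / 2 * (2 / 3) ^ 2 + c2 / 3 * (2 / 3) ^ 3 + c3 / 4 * (2 / 3) ^ 4) -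
        (c0 * (1 / 2) + c1 / 2 * (1 / 2) ^ 2 + c2 / 3 * (1 / 2) ^ 3 + c3 / 4 * (1 / 2) ^ 4)) +
      ((d0 * 1 + d1 / 2 * 1 ^ 2 + d2 / 3 * 1 ^ 3 + d3 / 4 * 1 ^ 4) -
        (d0 * (2 / 3) + d1 / 2 * (2 / 3) ^ 2 + d2 / 3 * (2 / 3) ^ 3 + d3 / 4 * (2 / 3) ^ 4)) := by
  have hdisj : Disjoint (Set.Icc (1 / 2 : ℝ) (2 / 3)) (Set.Ioc (2 / 3 : ℝ) 1) := by
    rw [Set.disjoint_left]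
    rintro x hx hx'
    obtain ⟨_, h⟩ := Set.mem_Icc.1 hx
    obtain ⟨h', _⟩ := Set.mem_Ioc.1 hx'
    linarith
  have hi1 : IntegrableOn G (Set.Icc (1 / 2 : ℝ) (2 / 3)) := by
    refine IntegrableOn.congr_fun ?_ (fun q hq => (h1 q hq).symm) measurableSet_Icc
    exact ((by fun_prop : Continuous fun q : ℝ =>
      c0 + c1 * q + c2 * q ^ 2 + c3 * q ^ 3)).integrableOn_Icc
  have hi2 : IntegrableOn G (Set.Ioc (2 / 3 : ℝ) 1) := by
    refine IntegrableOn.congr_fun ?_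
      (fun q hq => (h2 q (Set.Ioc_subset_Icc_self hq)).symm) measurableSet_Ioc
    exact ((by fun_prop : Continuous fun q : ℝ =>
      d0 + d1 * q + d2 * q ^ 2 + d3 * q ^ 3)).integrableOn_Icc.mono_set
      Set.Ioc_subset_Icc_self
  rw [← Set.Icc_union_Ioc_eq_Icc (by norm_num : (1 / 2 : ℝ) ≤ 2 / 3)
    (by norm_num : (2 / 3 : ℝ) ≤ 1),
    setIntegral_union hdisj measurableSet_Ioc hi1 hi2]
  congr 1
  · rw [setIntegral_congr_fun measurableSet_Icc h1,
      setInt_Icc _ (by norm_num : (1 / 2 : ℝ) ≤ 2 / 3),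
      interval_poly _ _ c0 c1 c2 c3 _ (fun x => rfl)]
  · rw [setIntegral_congr_fun measurableSet_Ioc
      (fun q hq => h2 q (Set.Ioc_subset_Icc_self hq)),
      ← intervalIntegral.integral_of_le (by norm_num : (2 / 3 : ℝ) ≤ 1),
      interval_poly _ _ d0 d1 d2 d3 _ (fun x => rfl)]

-- Inner evaluations, f = 1
lemma G1_vol (q : ℝ) (hq : q ∈ Set.Icc (1 / 2 : ℝ) (2 / 3)) :
    (∫ w1 in Set.Icc (1 - q) q, ∫ w2 in Set.Icc (q - w1) (1 - q), (1 : ℝ)) =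
      -3 / 2 + 5 * q + (-4) * q ^ 2 + 0 * q ^ 3 := by
  obtain ⟨h1, h2⟩ := Set.mem_Icc.1 hq
  rw [setIntegral_congr_fun measurableSet_Icc
    (g := fun w1 => (1 - 2 * q) + 1 * w1 + 0 * w1 ^ 2 + 0 * w1 ^ 3) ?_]
  · rw [setInt_Icc _ (by linarith), interval_poly _ _ (1 - 2 * q) 1 0 0 _ (fun x => rfl)]
    ring
  · intro w1 hw1
    obtain ⟨ha, hb⟩ := Set.mem_Icc.1 hw1
    simp only []
    rw [setInt_Icc _ (by linarith), intervalIntegral.integral_const]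
    simp only [smul_eq_mul, mul_one]
    ring

lemma G2_vol (q : ℝ) (hq : q ∈ Set.Icc (2 / 3 : ℝ) 1) :
    (∫ w1 in Set.Icc (1 - q) q, ∫ w2 in Set.Icc (q - w1) (1 - q), (1 : ℝ)) =
      1 / 2 + (-1) * q + (1 / 2) * q ^ 2 + 0 * q ^ 3 := by
  obtain ⟨h1, h2⟩ := Set.mem_Icc.1 hq
  rw [← Set.Icc_union_Ioc_eq_Icc (by linarith : (1 - q : ℝ) ≤ 2 * q - 1)
    (by linarith : (2 * q - 1 : ℝ) ≤ q)]
  have hdisj : Disjoint (Set.Icc (1 - q) (2 * q - 1)) (Set.Ioc (2 * q - 1) q) := by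
    rw [Set.disjoint_left]
    rintro x hx hx'
    obtain ⟨_, hb⟩ := Set.mem_Icc.1 hx
    obtain ⟨hc, _⟩ := Set.mem_Ioc.1 hx'
    linarith
  have hz : Set.EqOn (fun w1 => ∫ w2 in Set.Icc (q - w1) (1 - q), (1 : ℝ))
      (fun _ => 0) (Set.Icc (1 - q) (2 * q - 1)) := by
    intro w1 hw1
    obtain ⟨_, hb⟩ := Set.mem_Icc.1 hw1
    exact setInt_Icc_zero _ (by linarith)
  have hp : Set.EqOn (fun w1 => ∫ w2 in Set.Icc (q - w1) (1 - q), (1 : ℝ))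
      (fun w1 => (1 - 2 * q) + 1 * w1 + 0 * w1 ^ 2 + 0 * w1 ^ 3) (Set.Ioc (2 * q - 1) q) := by
    intro w1 hw1
    obtain ⟨ha, hb⟩ := Set.mem_Ioc.1 hw1
    simp only []
    rw [setInt_Icc _ (by linarith), intervalIntegral.integral_const]
    simp only [smul_eq_mul, mul_one]
    ring
  rw [setIntegral_union hdisj measurableSet_Ioc
    (integrableOn_zero.congr_fun (fun x hx => (hz hx).symm) measurableSet_Icc)
    (((by fun_prop : Continuous fun w1 : ℝ =>
        (1 - 2 * q) + 1 * w1 + 0 * w1 ^ 2 + 0 * w1 ^ 3).integrableOn_Icc.mono_set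
      Set.Ioc_subset_Icc_self).congr_fun (fun x hx => (hp hx).symm) measurableSet_Ioc),
    setIntegral_congr_fun measurableSet_Icc hz,
    setIntegral_congr_fun measurableSet_Ioc hp, integral_zero,
    ← intervalIntegral.integral_of_le (by linarith : (2 * q - 1 : ℝ) ≤ q),
    interval_poly _ _ (1 - 2 * q) 1 0 0 _ (fun x => rfl)]
  ring

-- Inner evaluations, f = w1
lemma G1_w1 (q : ℝ) (hq : q ∈ Set.Icc (1 / 2 : ℝ) (2 / 3)) :
    (∫ w1 in Set.Icc (1 - q) q, ∫ w2 in Set.Icc (q - w1) (1 - q), w1) =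
      -5 / 6 + 3 * q + (-3) * q ^ 2 + (2 / 3) * q ^ 3 := by
  obtain ⟨h1, h2⟩ := Set.mem_Icc.1 hq
  rw [setIntegral_congr_fun measurableSet_Icc
    (g := fun w1 => 0 + (1 - 2 * q) * w1 + 1 * w1 ^ 2 + 0 * w1 ^ 3) ?_]
  · rw [setInt_Icc _ (by linarith), interval_poly _ _ 0 (1 - 2 * q) 1 0 _ (fun x => rfl)]
    ring
  · intro w1 hw1
    obtain ⟨ha, hb⟩ := Set.mem_Icc.1 hw1
    simp only []
    rw [setInt_Icc _ (by linarith), intervalIntegral.integral_const]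
    simp only [smul_eq_mul]
    ring

lemma G2_w1 (q : ℝ) (hq : q ∈ Set.Icc (2 / 3 : ℝ) 1) :
    (∫ w1 in Set.Icc (1 - q) q, ∫ w2 in Set.Icc (q - w1) (1 - q), w1) =
      -1 / 6 + 1 * q + (-3 / 2) * q ^ 2 + (2 / 3) * q ^ 3 := by
  obtain ⟨h1, h2⟩ := Set.mem_Icc.1 hq
  rw [← Set.Icc_union_Ioc_eq_Icc (by linarith : (1 - q : ℝ) ≤ 2 * q - 1)
    (by linarith : (2 * q - 1 : ℝ) ≤ q)]
  have hdisj : Disjoint (Set.Icc (1 - q) (2 * q - 1)) (Set.Ioc (2 * q - 1) q) := by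
    rw [Set.disjoint_left]
    rintro x hx hx'
    obtain ⟨_, hb⟩ := Set.mem_Icc.1 hx
    obtain ⟨hc, _⟩ := Set.mem_Ioc.1 hx'
    linarith
  have hz : Set.EqOn (fun w1 => ∫ w2 in Set.Icc (q - w1) (1 - q), w1)
      (fun _ => 0) (Set.Icc (1 - q) (2 * q - 1)) := by
    intro w1 hw1
    obtain ⟨_, hb⟩ := Set.mem_Icc.1 hw1
    exact setInt_Icc_zero _ (by linarith)
  have hp : Set.EqOn (fun w1 => ∫ w2 in Set.Icc (q - w1) (1 - q), w1)
      (fun w1 => 0 + (1 - 2 * q) * w1 + 1 * w1 ^ 2 + 0 * w1 ^ 3) (Set.Ioc (2 * q - 1) q) := by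
    intro w1 hw1
    obtain ⟨ha, hb⟩ := Set.mem_Ioc.1 hw1
    simp only []
    rw [setInt_Icc _ (by linarith), intervalIntegral.integral_const]
    simp only [smul_eq_mul]
    ring
  rw [setIntegral_union hdisj measurableSet_Ioc
    (integrableOn_zero.congr_fun (fun x hx => (hz hx).symm) measurableSet_Icc)
    (((by fun_prop : Continuous fun w1 : ℝ =>
        0 + (1 - 2 * q) * w1 + 1 * w1 ^ 2 + 0 * w1 ^ 3).integrableOn_Icc.mono_set
      Set.Ioc_subset_Icc_self).congr_fun (fun x hx => (hp hx).symm) measurableSet_Ioc),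
    setIntegral_congr_fun measurableSet_Icc hz,
    setIntegral_congr_fun measurableSet_Ioc hp, integral_zero,
    ← intervalIntegral.integral_of_le (by linarith : (2 * q - 1 : ℝ) ≤ q),
    interval_poly _ _ 0 (1 - 2 * q) 1 0 _ (fun x => rfl)]
  ring

-- Inner evaluations, f = w2
lemma G1_w2 (q : ℝ) (hq : q ∈ Set.Icc (1 / 2 : ℝ) (2 / 3)) :
    (∫ w1 in Set.Icc (1 - q) q, ∫ w2 in Set.Icc (q - w1) (1 - q), w2) =
      -1 / 3 + 1 * q + (-1 / 2) * q ^ 2 + (-1 / 3) * q ^ 3 := by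
  obtain ⟨h1, h2⟩ := Set.mem_Icc.1 hq
  rw [setIntegral_congr_fun measurableSet_Icc
    (g := fun w1 => (1 - 2 * q) / 2 + q * w1 + (-1 / 2) * w1 ^ 2 + 0 * w1 ^ 3) ?_]
  · rw [setInt_Icc _ (by linarith),
      interval_poly _ _ ((1 - 2 * q) / 2) q (-1 / 2) 0 _ (fun x => rfl)]
    ring
  · intro w1 hw1
    obtain ⟨ha, hb⟩ := Set.mem_Icc.1 hw1
    simp only []
    rw [setInt_Icc _ (by linarith), integral_id]
    ring

lemma G2_w2 (q : ℝ) (hq : q ∈ Set.Icc (2 / 3 : ℝ) 1) :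
    (∫ w1 in Set.Icc (1 - q) q, ∫ w2 in Set.Icc (q - w1) (1 - q), w2) =
      1 / 3 + (-1) * q + 1 * q ^ 2 + (-1 / 3) * q ^ 3 := by
  obtain ⟨h1, h2⟩ := Set.mem_Icc.1 hq
  rw [← Set.Icc_union_Ioc_eq_Icc (by linarith : (1 - q : ℝ) ≤ 2 * q - 1)
    (by linarith : (2 * q - 1 : ℝ) ≤ q)]
  have hdisj : Disjoint (Set.Icc (1 - q) (2 * q - 1)) (Set.Ioc (2 * q - 1) q) := by
    rw [Set.disjoint_left]
    rintro x hx hx'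
    obtain ⟨_, hb⟩ := Set.mem_Icc.1 hx
    obtain ⟨hc, _⟩ := Set.mem_Ioc.1 hx'
    linarith
  have hz : Set.EqOn (fun w1 => ∫ w2 in Set.Icc (q - w1) (1 - q), w2)
      (fun _ => 0) (Set.Icc (1 - q) (2 * q - 1)) := by
    intro w1 hw1
    obtain ⟨_, hb⟩ := Set.mem_Icc.1 hw1
    exact setInt_Icc_zero _ (by linarith)
  have hp : Set.EqOn (fun w1 => ∫ w2 in Set.Icc (q - w1) (1 - q), w2)
      (fun w1 => (1 - 2 * q) / 2 + q * w1 + (-1 / 2) * w1 ^ 2 + 0 * w1 ^ 3)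
      (Set.Ioc (2 * q - 1) q) := by
    intro w1 hw1
    obtain ⟨ha, hb⟩ := Set.mem_Ioc.1 hw1
    simp only []
    rw [setInt_Icc _ (by linarith), integral_id]
    ring
  rw [setIntegral_union hdisj measurableSet_Ioc
    (integrableOn_zero.congr_fun (fun x hx => (hz hx).symm) measurableSet_Icc)
    (((by fun_prop : Continuous fun w1 : ℝ =>
        (1 - 2 * q) / 2 + q * w1 + (-1 / 2) * w1 ^ 2 + 0 * w1 ^ 3).integrableOn_Icc.mono_set
      Set.Ioc_subset_Icc_self).congr_fun (fun x hx => (hp hx).symm) measurableSet_Ioc),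
    setIntegral_congr_fun measurableSet_Icc hz,
    setIntegral_congr_fun measurableSet_Ioc hp, integral_zero,
    ← intervalIntegral.integral_of_le (by linarith : (2 * q - 1 : ℝ) ≤ q),
    interval_poly _ _ ((1 - 2 * q) / 2) q (-1 / 2) 0 _ (fun x => rfl)]
  ring

lemma integral_one_eq : (∫ _p in representationRegion, (1 : ℝ)) = 1 / 72 := by
  rw [region_integral_eq (fun _ => (1 : ℝ)) continuous_const,
    split_eval _ (-3 / 2) 5 (-4) 0 (1 / 2) (-1) (1 / 2) 0 G1_vol G2_vol]
  norm_num

lemma integral_w1_eq : (∫ p in representationRegion, p.2.1) = 7 / 864 := by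
  rw [region_integral_eq (fun p => p.2.1) (by fun_prop),
    split_eval _ (-5 / 6) 3 (-3) (2 / 3) (-1 / 6) 1 (-3 / 2) (2 / 3) G1_w1 G2_w1]
  norm_num

lemma integral_w2_eq : (∫ p in representationRegion, p.2.2) = 5 / 1728 := by
  rw [region_integral_eq (fun p => p.2.2) (by fun_prop),
    split_eval _ (-1 / 3) 1 (-1 / 2) (-1 / 3) (1 / 3) (-1) 1 (-1 / 3) G1_w2 G2_w2]
  norm_num

lemma volume_toReal_eq : (volume representationRegion).toReal = 1 / 72 := by
  have h := integral_one_eq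
  rwa [setIntegral_const, smul_eq_mul, mul_one] at h

lemma volume_ne_top : volume representationRegion ≠ ⊤ := by
  refine ne_top_of_le_ne_top ?_ (measure_mono region_subset_Icc)
  exact (isCompact_Icc.measure_lt_top).ne

end AvgRep

/-- For the game $[3;2,1,1]$, the projected representation polytope has volume
$1/72$, $\int w_1 = 7/864$ and $\int w_2 = 5/1728$, so the average representation
weight vector is $(7/12, 5/24, 5/24)$. -/
theorem average_representation_game_3_211 :
    volume representationRegion = ENNReal.ofReal (1 / 72) ∧
    (∫ p in representationRegion, p.2.1) = 7 / 864 ∧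
    (∫ p in representationRegion, p.2.2) = 5 / 1728 ∧
    (∫ p in representationRegion, p.2.1) / (volume representationRegion).toReal
      = 7 / 12 ∧
    (∫ p in representationRegion, p.2.2) / (volume representationRegion).toReal
      = 5 / 24 ∧
    (∫ p in representationRegion, (1 - p.2.1 - p.2.2)) /
        (volume representationRegion).toReal = 5 / 24 := by
  have hvol : volume representationRegion = ENNReal.ofReal (1 / 72) := by
    rw [← AvgRep.volume_toReal_eq, ENNReal.ofReal_toReal AvgRep.volume_ne_top]
  have hsub : (∫ p in representationRegion, (1 - p.2.1 - p.2.2)) = 5 / 1728 := by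
    have hi1 : IntegrableOn (fun p : ℝ × ℝ × ℝ => (1 : ℝ) - p.2.1)
        representationRegion := AvgRep.integrableOn_region _ (by fun_prop)
    have hi1' : IntegrableOn (fun _p : ℝ × ℝ × ℝ => (1 : ℝ))
        representationRegion := AvgRep.integrableOn_region _ (by fun_prop)
    have hi2 : IntegrableOn (fun p : ℝ × ℝ × ℝ => p.2.1)
        representationRegion := AvgRep.integrableOn_region _ (by fun_prop)
    have hi3 : IntegrableOn (fun p : ℝ × ℝ × ℝ => p.2.2)
        representationRegion := AvgRep.integrableOn_region _ (by fun_prop)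
    rw [integral_sub hi1 hi3, integral_sub hi1' hi2, AvgRep.integral_one_eq,
      AvgRep.integral_w1_eq, AvgRep.integral_w2_eq]
    norm_num
  refine ⟨hvol, AvgRep.integral_w1_eq, AvgRep.integral_w2_eq, ?_, ?_, ?_⟩
  · rw [AvgRep.integral_w1_eq, AvgRep.volume_toReal_eq]; norm_num
  · rw [AvgRep.integral_w2_eq, AvgRep.volume_toReal_eq]; norm_num
  · rw [hsub, AvgRep.volume_toReal_eq]; norm_num
end
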